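/- The group presented by generators f_{ij} for i,j ∈ {1,2,3,4}, with relations f_{1j} = 1 and f_{i1} = 1 for all i, f_{22} = f_{44} = 1, f_{23} = f_{24}, f_{24} = f_{34}, f_{43}⁻¹ = f_{33}⁻¹ f_{34}, f_{32} = f_{42}, f_{42} = f_{43}, and f_{23} = f_{32}⁻¹ f_{33}, is isomorphic to ℤ ⊕ ℤ. -/

import Mathlib

open FreeGroup

namespace Stmt6Aux

abbrev rels : Set (FreeGroup (Fin 4 × Fin 4)) :=
  ({r | ∃ j : Fin 4, r = of ((0 : Fin 4), j)} ∪
    {r | ∃ i : Fin 4, r = of (i, (0 : Fin 4))} ∪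
    {of ((1 : Fin 4), (1 : Fin 4)),
     of ((3 : Fin 4), (3 : Fin 4)),
     of ((1 : Fin 4), (2 : Fin 4)) * (of ((1 : Fin 4), (3 : Fin 4)))⁻¹,
     of ((1 : Fin 4), (3 : Fin 4)) * (of ((2 : Fin 4), (3 : Fin 4)))⁻¹,
     (of ((3 : Fin 4), (2 : Fin 4)))⁻¹ *
       ((of ((2 : Fin 4), (2 : Fin 4)))⁻¹ * of ((2 : Fin 4), (3 : Fin 4)))⁻¹,
     of ((2 : Fin 4), (1 : Fin 4)) * (of ((3 : Fin 4), (1 : Fin 4)))⁻¹,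
     of ((3 : Fin 4), (1 : Fin 4)) * (of ((3 : Fin 4), (2 : Fin 4)))⁻¹,
     of ((1 : Fin 4), (2 : Fin 4)) *
       ((of ((2 : Fin 4), (1 : Fin 4)))⁻¹ * of ((2 : Fin 4), (2 : Fin 4)))⁻¹})

abbrev P := PresentedGroup rels

def tgt (p : Fin 4 × Fin 4) : Multiplicative (ℤ × ℤ) :=
  Multiplicative.ofAdd
    ((if p = (1, 2) ∨ p = (1, 3) ∨ p = (2, 3) ∨ p = (2, 2) then 1 else 0),
     (if p = (2, 1) ∨ p = (3, 1) ∨ p = (3, 2) ∨ p = (2, 2) then 1 else 0))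

lemma tgt_rels : ∀ r ∈ rels, FreeGroup.lift tgt r = 1 := by
  rintro r hr
  simp only [Set.mem_union, Set.mem_setOf_eq, Set.mem_insert_iff, Set.mem_singleton_iff] at hr
  rcases hr with (⟨j, rfl⟩ | ⟨i, rfl⟩) | rfl | rfl | rfl | rfl | rfl | rfl | rfl | rfl <;>
    first
      | (fin_cases j <;> simp [tgt] <;> decide)
      | (fin_cases i <;> simp [tgt] <;> decide)
      | (simp only [_root_.map_mul, _root_.map_inv, lift_apply_of, tgt]; decide)

def φ : P →* Multiplicative (ℤ × ℤ) := PresentedGroup.toGroup tgt_rels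

lemma mk_rel {r : FreeGroup (Fin 4 × Fin 4)} (h : r ∈ rels) : PresentedGroup.mk rels r = 1 :=
  (QuotientGroup.eq_one_iff r).mpr (Subgroup.subset_normalClosure h)

local notation "u" => (PresentedGroup.of ((1 : Fin 4), (2 : Fin 4)) : P)
local notation "v" => (PresentedGroup.of ((2 : Fin 4), (1 : Fin 4)) : P)

lemma h0j (j : Fin 4) : (PresentedGroup.of ((0 : Fin 4), j) : P) = 1 :=
  mk_rel (Or.inl (Or.inl ⟨j, rfl⟩))

lemma hi0 (i : Fin 4) : (PresentedGroup.of (i, (0 : Fin 4)) : P) = 1 :=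
  mk_rel (Or.inl (Or.inr ⟨i, rfl⟩))

lemma h11 : (PresentedGroup.of ((1 : Fin 4), (1 : Fin 4)) : P) = 1 :=
  mk_rel (Or.inr (by simp))

lemma h33 : (PresentedGroup.of ((3 : Fin 4), (3 : Fin 4)) : P) = 1 :=
  mk_rel (Or.inr (by simp))

lemma h13 : (PresentedGroup.of ((1 : Fin 4), (3 : Fin 4)) : P) = u := by
  have h := mk_rel (show of ((1:Fin 4),(2:Fin 4)) * (of ((1:Fin 4),(3:Fin 4)))⁻¹ ∈ rels from
    Or.inr (by simp))
  simp only [_root_.map_mul, _root_.map_inv] at h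
  have h' : (u * (PresentedGroup.of ((1:Fin 4),(3:Fin 4)) : P)⁻¹) = 1 := h
  rw [mul_inv_eq_one] at h'
  exact h'.symm

lemma h23 : (PresentedGroup.of ((2 : Fin 4), (3 : Fin 4)) : P) = u := by
  have h := mk_rel (show of ((1:Fin 4),(3:Fin 4)) * (of ((2:Fin 4),(3:Fin 4)))⁻¹ ∈ rels from
    Or.inr (by simp))
  simp only [_root_.map_mul, _root_.map_inv] at h
  have h' : ((PresentedGroup.of ((1:Fin 4),(3:Fin 4)) : P) *
      (PresentedGroup.of ((2:Fin 4),(3:Fin 4)) : P)⁻¹) = 1 := h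
  rw [mul_inv_eq_one] at h'
  rw [← h', h13]

lemma h31 : (PresentedGroup.of ((3 : Fin 4), (1 : Fin 4)) : P) = v := by
  have h := mk_rel (show of ((2:Fin 4),(1:Fin 4)) * (of ((3:Fin 4),(1:Fin 4)))⁻¹ ∈ rels from
    Or.inr (by simp))
  simp only [_root_.map_mul, _root_.map_inv] at h
  have h' : (v * (PresentedGroup.of ((3:Fin 4),(1:Fin 4)) : P)⁻¹) = 1 := h
  rw [mul_inv_eq_one] at h'
  exact h'.symm

lemma h32 : (PresentedGroup.of ((3 : Fin 4), (2 : Fin 4)) : P) = v := by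
  have h := mk_rel (show of ((3:Fin 4),(1:Fin 4)) * (of ((3:Fin 4),(2:Fin 4)))⁻¹ ∈ rels from
    Or.inr (by simp))
  simp only [_root_.map_mul, _root_.map_inv] at h
  have h' : ((PresentedGroup.of ((3:Fin 4),(1:Fin 4)) : P) *
      (PresentedGroup.of ((3:Fin 4),(2:Fin 4)) : P)⁻¹) = 1 := h
  rw [mul_inv_eq_one] at h'
  rw [← h', h31]

lemma h22 : (PresentedGroup.of ((2 : Fin 4), (2 : Fin 4)) : P) = u * v := by
  have h := mk_rel (show (of ((3:Fin 4),(2:Fin 4)))⁻¹ *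
      ((of ((2:Fin 4),(2:Fin 4)))⁻¹ * of ((2:Fin 4),(3:Fin 4)))⁻¹ ∈ rels from
    Or.inr (by simp))
  simp only [_root_.map_mul, _root_.map_inv] at h
  have h' : ((PresentedGroup.of ((3:Fin 4),(2:Fin 4)) : P)⁻¹ *
      ((PresentedGroup.of ((2:Fin 4),(2:Fin 4)) : P)⁻¹ *
        (PresentedGroup.of ((2:Fin 4),(3:Fin 4)) : P))⁻¹) = 1 := h
  rw [inv_mul_eq_one] at h'
  rw [h32, h23] at h'
  -- h' : v = ((of22)⁻¹ * u)⁻¹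
  have : v = u⁻¹ * (PresentedGroup.of ((2:Fin 4),(2:Fin 4)) : P) := by rw [h']; group
  rw [this]; group

lemma h22' : (PresentedGroup.of ((2 : Fin 4), (2 : Fin 4)) : P) = v * u := by
  have h := mk_rel (show of ((1:Fin 4),(2:Fin 4)) *
      ((of ((2:Fin 4),(1:Fin 4)))⁻¹ * of ((2:Fin 4),(2:Fin 4)))⁻¹ ∈ rels from
    Or.inr (by simp))
  simp only [_root_.map_mul, _root_.map_inv] at h
  have h' : (u * ((v : P)⁻¹ * (PresentedGroup.of ((2:Fin 4),(2:Fin 4)) : P))⁻¹) = 1 := h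
  rw [mul_inv_eq_one] at h'
  rw [h']; group

lemma hcomm : Commute (u : P) v := by
  show _ = _
  rw [← h22, ← h22']

def e : Multiplicative (ℤ × ℤ) ≃* Multiplicative ℤ × Multiplicative ℤ where
  toFun g := (Multiplicative.ofAdd g.toAdd.1, Multiplicative.ofAdd g.toAdd.2)
  invFun p := Multiplicative.ofAdd (p.1.toAdd, p.2.toAdd)
  left_inv _ := rfl
  right_inv _ := rfl
  map_mul' _ _ := rfl

def ψ : Multiplicative (ℤ × ℤ) →* P :=
  ((zpowersHom P u).noncommCoprod (zpowersHom P v)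
      (fun m n => hcomm.zpow_zpow m.toAdd n.toAdd)).comp e.toMonoidHom

lemma ψ_apply (m n : ℤ) : ψ (Multiplicative.ofAdd (m, n)) = u ^ m * v ^ n := rfl

lemma ψ_tgt (p : Fin 4 × Fin 4) :
    ψ (tgt p) =
      u ^ (if p = (1, 2) ∨ p = (1, 3) ∨ p = (2, 3) ∨ p = (2, 2) then (1 : ℤ) else 0) *
        v ^ (if p = (2, 1) ∨ p = (3, 1) ∨ p = (3, 2) ∨ p = (2, 2) then (1 : ℤ) else 0) := rfl

lemma leftinv (g : P) : ψ (φ g) = g := by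
  induction g using PresentedGroup.induction_on with
  | H z =>
  induction z using FreeGroup.induction_on with
  | C1 => simp
  | of x =>
    show ψ (φ (PresentedGroup.of x)) = PresentedGroup.of x
    rw [φ, PresentedGroup.toGroup.of, ψ_tgt]
    fin_cases x <;>
      simp (config := { decide := true }) [h0j, hi0, h11, h33, h13, h23, h31, h32, h22] <;>
        first
          | exact (h0j 0).symm
          | exact h11.symm
  | inv_of x ih =>
    simp only [_root_.map_inv]
    rw [ih]
  | mul x y ihx ihy =>
    simp only [_root_.map_mul]
    rw [ihx, ihy]

lemma φ_surj : Function.Surjective φ := by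
  intro g
  refine ⟨ψ g, ?_⟩
  obtain ⟨m, n⟩ := g
  show φ (u ^ m * v ^ n) = _
  simp only [_root_.map_mul, _root_.map_zpow, φ, PresentedGroup.toGroup.of]
  simp [tgt, ← ofAdd_zsmul, ← ofAdd_add, Prod.ext_iff]
  rfl

lemma φ_inj : Function.Injective φ := by
  intro a b h
  rw [← leftinv a, ← leftinv b, h]

end Stmt6Aux

open FreeGroup in
/-- The group presented by generators `f i j` (`i j ∈ {1,2,3,4}`, here indexed by
`Fin 4` with `0 ↔ 1`, …, `3 ↔ 4`) and relations `f 1 j = 1`, `f i 1 = 1`,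
`f 22 = f 44 = 1`, `f 23 = f 24`, `f 24 = f 34`, `(f 43)⁻¹ = (f 33)⁻¹ * f 34`,
`f 32 = f 42`, `f 42 = f 43`, `f 23 = (f 32)⁻¹ * f 33`
is isomorphic to `ℤ ⊕ ℤ`. -/
theorem stmt_6 :
    Nonempty
      (PresentedGroup
          (({r | ∃ j : Fin 4, r = of ((0 : Fin 4), j)} ∪
            {r | ∃ i : Fin 4, r = of (i, (0 : Fin 4))} ∪
            {of ((1 : Fin 4), (1 : Fin 4)),
             of ((3 : Fin 4), (3 : Fin 4)),
             of ((1 : Fin 4), (2 : Fin 4)) * (of ((1 : Fin 4), (3 : Fin 4)))⁻¹,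
             of ((1 : Fin 4), (3 : Fin 4)) * (of ((2 : Fin 4), (3 : Fin 4)))⁻¹,
             (of ((3 : Fin 4), (2 : Fin 4)))⁻¹ *
               ((of ((2 : Fin 4), (2 : Fin 4)))⁻¹ * of ((2 : Fin 4), (3 : Fin 4)))⁻¹,
             of ((2 : Fin 4), (1 : Fin 4)) * (of ((3 : Fin 4), (1 : Fin 4)))⁻¹,
             of ((3 : Fin 4), (1 : Fin 4)) * (of ((3 : Fin 4), (2 : Fin 4)))⁻¹,
             of ((1 : Fin 4), (2 : Fin 4)) *
               ((of ((2 : Fin 4), (1 : Fin 4)))⁻¹ * of ((2 : Fin 4), (2 : Fin 4)))⁻¹}) :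
            Set (FreeGroup (Fin 4 × Fin 4))) ≃*
        Multiplicative (ℤ × ℤ)) := by
  exact ⟨MulEquiv.ofBijective Stmt6Aux.φ ⟨Stmt6Aux.φ_inj, Stmt6Aux.φ_surj⟩⟩
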